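/- For A ∈ B(H), w(A) ≥ (1/2)‖A‖ + (1/2)| ‖Re(A)‖ − ‖Im(A)‖ |. -/

import Mathlib

open ContinuousLinearMap in
noncomputable def numRad {E : Type*} [NormedAddCommGroup E] [InnerProductSpace ℂ E]
    (T : E →L[ℂ] E) : ℝ :=
  ⨆ x : {x : E // ‖x‖ = 1}, ‖(inner ℂ (T x) (x : E) : ℂ)‖

variable {H : Type*} [NormedAddCommGroup H] [InnerProductSpace ℂ H] [CompleteSpace H]

/-- `|A| = (A*A)^{1/2}`, the positive square root of `A*A`. -/
noncomputable def absOp (A : H →L[ℂ] H) : H →L[ℂ] H :=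
  CFC.sqrt (ContinuousLinearMap.adjoint A * A)

/-- real part of an operator -/
noncomputable def reOp (A : H →L[ℂ] H) : H →L[ℂ] H :=
  (1 / 2 : ℂ) • (A + ContinuousLinearMap.adjoint A)

/-- imaginary part of an operator -/
noncomputable def imOp (A : H →L[ℂ] H) : H →L[ℂ] H :=
  (1 / (2 * Complex.I) : ℂ) • (A - ContinuousLinearMap.adjoint A)

/-- the block diagonal operator `diag(A,B)` on `H ⊕ H` (ℓ²-sum). -/
noncomputable def blockDiag (A B : H →L[ℂ] H) :
    WithLp 2 (H × H) →L[ℂ] WithLp 2 (H × H) :=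
  ((WithLp.prodContinuousLinearEquiv 2 ℂ H H).symm.toContinuousLinearMap).comp
    ((A.prodMap B).comp (WithLp.prodContinuousLinearEquiv 2 ℂ H H).toContinuousLinearMap)

/-- the off-diagonal block operator `[[O,A],[B,O]] : (x,y) ↦ (A y, B x)` on `H ⊕ H`. -/
noncomputable def blockOffDiag (A B : H →L[ℂ] H) :
    WithLp 2 (H × H) →L[ℂ] WithLp 2 (H × H) :=
  ((WithLp.prodContinuousLinearEquiv 2 ℂ H H).symm.toContinuousLinearMap).comp
    (((A.prodMap B).comp (ContinuousLinearEquiv.prodComm ℂ H H).toContinuousLinearMap).comp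
      (WithLp.prodContinuousLinearEquiv 2 ℂ H H).toContinuousLinearMap)

set_option linter.unusedSectionVars false in
open ContinuousLinearMap in
lemma sa_norm_le (T : H →L[ℂ] H) (hT : ∀ x y : H, (inner ℂ (T x) y : ℂ) = inner ℂ x (T y))
    (M : ℝ) (hM : 0 ≤ M) (h : ∀ x : H, ‖x‖ = 1 → ‖(inner ℂ (T x) x : ℂ)‖ ≤ M) :
    ‖T‖ ≤ M := by
  have h' : ∀ z : H, ‖(inner ℂ (T z) z : ℂ)‖ ≤ M * ‖z‖ ^ 2 := by
    intro z
    rcases eq_or_ne z 0 with rfl | hz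
    · simp
    · have hnz : ‖z‖ ≠ 0 := norm_ne_zero_iff.2 hz
      set u : H := ((‖z‖ : ℂ))⁻¹ • z with hu
      have hu1 : ‖u‖ = 1 := by
        simp [hu, norm_smul, inv_mul_cancel₀ hnz]
      have hinner : (inner ℂ (T u) u : ℂ) = ((‖z‖ : ℂ))⁻¹ * (((‖z‖ : ℂ))⁻¹ * inner ℂ (T z) z) := by
        simp [hu, inner_smul_left, inner_smul_right, map_smul, mul_comm]
      have := h u hu1
      rw [hinner] at this
      rw [norm_mul, norm_mul] at this
      simp only [norm_inv, Complex.norm_real, Real.norm_eq_abs, abs_of_nonneg (norm_nonneg z)] at this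
      have hz2 : (0:ℝ) < ‖z‖ := lt_of_le_of_ne (norm_nonneg z) (Ne.symm hnz)
      rw [inv_mul_le_iff₀ hz2, inv_mul_le_iff₀ hz2] at this
      calc ‖(inner ℂ (T z) z : ℂ)‖ ≤ ‖z‖ * (‖z‖ * M) := this
        _ = M * ‖z‖ ^ 2 := by ring
  have key : ∀ x y : H, |Complex.re (inner ℂ (T x) y : ℂ)| ≤ M / 2 * (‖x‖ ^ 2 + ‖y‖ ^ 2) := by
    intro x y
    have e2 : (inner ℂ (T y) x : ℂ) = starRingEnd ℂ (inner ℂ (T x) y : ℂ) := by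
      rw [hT y x, ← inner_conj_symm]
    have e1 : (inner ℂ (T (x+y)) (x+y) : ℂ) - inner ℂ (T (x-y)) (x-y)
        = ((4 * Complex.re (inner ℂ (T x) y : ℂ) : ℝ) : ℂ) := by
      simp only [map_add, map_sub, inner_add_left, inner_add_right, inner_sub_left,
        inner_sub_right]
      have h2 : (inner ℂ (T x) y : ℂ) + inner ℂ (T y) x
          = 2 * ((Complex.re (inner ℂ (T x) y : ℂ) : ℝ) : ℂ) := by
        rw [e2, Complex.add_conj]
        push_cast
        ring
      push_cast
      linear_combination 2 * h2
    have habs : |(4 * Complex.re (inner ℂ (T x) y : ℂ) : ℝ)|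
        ≤ M * ‖x+y‖ ^ 2 + M * ‖x-y‖ ^ 2 := by
      calc |(4 * Complex.re (inner ℂ (T x) y : ℂ) : ℝ)|
          = ‖((4 * Complex.re (inner ℂ (T x) y : ℂ) : ℝ) : ℂ)‖ := by
            rw [Complex.norm_real, Real.norm_eq_abs]
        _ = ‖(inner ℂ (T (x+y)) (x+y) : ℂ) - inner ℂ (T (x-y)) (x-y)‖ := by rw [e1]
        _ ≤ ‖(inner ℂ (T (x+y)) (x+y) : ℂ)‖ + ‖(inner ℂ (T (x-y)) (x-y) : ℂ)‖ := norm_sub_le _ _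
        _ ≤ M * ‖x+y‖ ^ 2 + M * ‖x-y‖ ^ 2 := add_le_add (h' _) (h' _)
    have hp := parallelogram_law_with_norm ℂ x y
    rw [abs_mul, abs_of_nonneg (by norm_num : (0:ℝ) ≤ 4)] at habs
    nlinarith [abs_nonneg (Complex.re (inner ℂ (T x) y : ℂ))]
  refine T.opNorm_le_bound hM fun x => ?_
  rcases eq_or_ne (T x) 0 with h0 | h0
  · rw [h0, norm_zero]; positivity
  rcases eq_or_ne x 0 with rfl | hx0
  · simp at h0
  have hx : (0:ℝ) < ‖x‖ := norm_pos_iff.2 hx0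
  have hTx : (0:ℝ) < ‖T x‖ := norm_pos_iff.2 h0
  set y : H := ((‖x‖ / ‖T x‖ : ℝ) : ℂ) • T x with hy
  have hyn : ‖y‖ = ‖x‖ := by
    simp [hy, norm_smul, abs_of_nonneg (div_nonneg (norm_nonneg x) (norm_nonneg (T x)))]
    field_simp
  have hre : Complex.re (inner ℂ (T x) y : ℂ) = ‖x‖ * ‖T x‖ := by
    rw [hy, inner_smul_right]
    rw [@inner_self_eq_norm_sq_to_K ℂ]
    simp [Complex.re_ofReal_mul, ← Complex.ofReal_pow]
    field_simp
  have := key x y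
  rw [hre, hyn] at this
  rw [abs_of_nonneg (by positivity)] at this
  have : ‖x‖ * ‖T x‖ ≤ M * ‖x‖ ^ 2 := by nlinarith
  nlinarith


set_option linter.unusedSectionVars false in
lemma numRad_nonneg (A : H →L[ℂ] H) : 0 ≤ numRad A :=
  Real.iSup_nonneg fun _ => norm_nonneg _

lemma numRad_bdd (A : H →L[ℂ] H) :
    BddAbove (Set.range fun x : {x : H // ‖x‖ = 1} => ‖(inner ℂ (A x) (x : H) : ℂ)‖) := by
  refine ⟨‖A‖, ?_⟩
  rintro _ ⟨x, rfl⟩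
  calc ‖(inner ℂ (A x) (x : H) : ℂ)‖ ≤ ‖A (x : H)‖ * ‖(x : H)‖ := norm_inner_le_norm _ _
    _ ≤ (‖A‖ * ‖(x : H)‖) * ‖(x : H)‖ := by
        exact mul_le_mul_of_nonneg_right (A.le_opNorm _) (norm_nonneg _)
    _ = ‖A‖ := by rw [x.2]; ring

lemma inner_le_numRad (A : H →L[ℂ] H) (x : H) (hx : ‖x‖ = 1) :
    ‖(inner ℂ (A x) x : ℂ)‖ ≤ numRad A :=
  le_ciSup (numRad_bdd A) (⟨x, hx⟩ : {x : H // ‖x‖ = 1})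

lemma reOp_sa (A : H →L[ℂ] H) :
    ContinuousLinearMap.adjoint (reOp A) = reOp A := by
  rw [reOp, ← ContinuousLinearMap.star_eq_adjoint, ← ContinuousLinearMap.star_eq_adjoint,
    star_smul, star_add, star_star]
  simp [add_comm]

lemma imOp_sa (A : H →L[ℂ] H) :
    ContinuousLinearMap.adjoint (imOp A) = imOp A := by
  rw [imOp, ← ContinuousLinearMap.star_eq_adjoint, ← ContinuousLinearMap.star_eq_adjoint,
    star_smul, star_sub, star_star]
  have h1 : star (1 / (2 * Complex.I) : ℂ) = -(1 / (2 * Complex.I)) := by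
    rw [Complex.star_def]
    simp [Complex.ext_iff, Complex.div_im, Complex.div_re]
  rw [h1, neg_smul, ← smul_neg, neg_sub]

lemma norm_le_reAdd (A : H →L[ℂ] H) : ‖A‖ ≤ ‖reOp A‖ + ‖imOp A‖ := by
  have hIc : Complex.I * (1 / (2 * Complex.I)) = 1 / 2 := by
    field_simp
  have hA : A = reOp A + Complex.I • imOp A := by
    ext x
    simp only [reOp, imOp, ContinuousLinearMap.add_apply, ContinuousLinearMap.smul_apply,
      ContinuousLinearMap.sub_apply, smul_smul, hIc]
    module
  calc ‖A‖ = ‖reOp A + Complex.I • imOp A‖ := by rw [← hA]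
    _ ≤ ‖reOp A‖ + ‖Complex.I • imOp A‖ := norm_add_le _ _
    _ = ‖reOp A‖ + ‖imOp A‖ := by rw [norm_smul, Complex.norm_I, one_mul]

lemma inner_reOp_le (A : H →L[ℂ] H) (x : H) :
    ‖(inner ℂ (reOp A x) x : ℂ)‖ ≤ ‖(inner ℂ (A x) x : ℂ)‖ := by
  have : (inner ℂ (reOp A x) x : ℂ)
      = (1/2 : ℂ) * (inner ℂ (A x) x + inner ℂ (ContinuousLinearMap.adjoint A x) x) := by
    have hc : (starRingEnd ℂ) (1/2 : ℂ) = 1/2 := by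
      simp [Complex.ext_iff]
    simp [reOp, inner_smul_left, inner_add_left, hc, map_ofNat, mul_add, mul_comm]
  rw [this, norm_mul]
  have h2 : ‖(inner ℂ (ContinuousLinearMap.adjoint A x) x : ℂ)‖ = ‖(inner ℂ (A x) x : ℂ)‖ := by
    rw [ContinuousLinearMap.adjoint_inner_left]
    exact norm_inner_symm _ _
  calc ‖(1/2 : ℂ)‖ * ‖(inner ℂ (A x) x : ℂ) + inner ℂ (ContinuousLinearMap.adjoint A x) x‖
      ≤ (1/2) * (‖(inner ℂ (A x) x : ℂ)‖ + ‖(inner ℂ (ContinuousLinearMap.adjoint A x) x : ℂ)‖) := by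
        rw [show ‖(1/2 : ℂ)‖ = 1/2 by simp]
        exact mul_le_mul_of_nonneg_left (norm_add_le _ _) (by norm_num)
    _ = ‖(inner ℂ (A x) x : ℂ)‖ := by rw [h2]; ring

lemma inner_imOp_le (A : H →L[ℂ] H) (x : H) :
    ‖(inner ℂ (imOp A x) x : ℂ)‖ ≤ ‖(inner ℂ (A x) x : ℂ)‖ := by
  have : (inner ℂ (imOp A x) x : ℂ)
      = (starRingEnd ℂ) (1 / (2 * Complex.I))
        * (inner ℂ (A x) x - inner ℂ (ContinuousLinearMap.adjoint A x) x) := by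
    simp [imOp, inner_smul_left, inner_sub_left]
  rw [this, norm_mul]
  have h2 : ‖(inner ℂ (ContinuousLinearMap.adjoint A x) x : ℂ)‖ = ‖(inner ℂ (A x) x : ℂ)‖ := by
    rw [ContinuousLinearMap.adjoint_inner_left]
    exact norm_inner_symm _ _
  have hc : ‖(starRingEnd ℂ) (1 / (2 * Complex.I))‖ = 1/2 := by
    rw [RCLike.norm_conj]
    simp
  calc ‖(starRingEnd ℂ) (1 / (2 * Complex.I))‖
        * ‖(inner ℂ (A x) x : ℂ) - inner ℂ (ContinuousLinearMap.adjoint A x) x‖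
      ≤ (1/2) * (‖(inner ℂ (A x) x : ℂ)‖ + ‖(inner ℂ (ContinuousLinearMap.adjoint A x) x : ℂ)‖) := by
        rw [hc]
        exact mul_le_mul_of_nonneg_left (norm_sub_le _ _) (by norm_num)
    _ = ‖(inner ℂ (A x) x : ℂ)‖ := by rw [h2]; ring

theorem numRad_lower_bound (A : H →L[ℂ] H) :
    numRad A ≥ (1 / 2) * ‖A‖ + (1 / 2) * |‖reOp A‖ - ‖imOp A‖| := by
  
  have w0 := numRad_nonneg A
  have hsym : ∀ (T : H →L[ℂ] H), ContinuousLinearMap.adjoint T = T →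
      ∀ x y : H, (inner ℂ (T x) y : ℂ) = inner ℂ x (T y) := by
    intro T hadj x y
    conv_lhs => rw [← hadj]
    exact ContinuousLinearMap.adjoint_inner_left T y x
  have hr : ‖reOp A‖ ≤ numRad A :=
    sa_norm_le (reOp A) (hsym _ (reOp_sa A)) (numRad A) w0
      (fun x hx => (inner_reOp_le A x).trans (inner_le_numRad A x hx))
  have hi : ‖imOp A‖ ≤ numRad A :=
    sa_norm_le (imOp A) (hsym _ (imOp_sa A)) (numRad A) w0
      (fun x hx => (inner_imOp_le A x).trans (inner_le_numRad A x hx))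
  have hn := norm_le_reAdd A
  rcases abs_cases (‖reOp A‖ - ‖imOp A‖) with ⟨h1, _⟩ | ⟨h1, _⟩ <;> rw [h1] <;> linarith
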